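/- If A is a ring in which every ideal generated by countably many elements is finitely generated, then every ideal is finitely generated (i.e., A is Noetherian). -/
import Mathlib


theorem stmt_0 {A : Type*} [CommRing A]
    (h : ∀ S : Set A, S.Countable → (Ideal.span S).FG) :
    IsNoetherianRing A := by
  classical
  rw [isNoetherianRing_iff_ideal_fg]
  intro I
  by_contra hI
  have key : ∀ s : Finset A, (↑s : Set A) ⊆ ↑I →
      ∃ x, x ∈ I ∧ x ∉ Ideal.span (↑s : Set A) := by
    intro s hs
    by_contra hc
    push_neg at hc
    apply hI
    refine ⟨s, le_antisymm ?_ ?_⟩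
    · rw [Ideal.span_le]; exact hs
    · intro x hx; exact hc x hx
  let g : ℕ → {s : Finset A // (↑s : Set A) ⊆ ↑I} := fun n =>
    Nat.rec ⟨∅, by simp⟩ (fun _ p => ⟨p.1 ∪ {(key p.1 p.2).choose},
      by
        intro x hx
        simp only [Finset.coe_union, Set.mem_union, Finset.coe_singleton,
          Set.mem_singleton_iff] at hx
        rcases hx with hx | rfl
        · exact p.2 hx
        · exact (key p.1 p.2).choose_spec.1⟩) n
  let f : ℕ → A := fun n => (key (g n).1 (g n).2).choose
  have hf1 : ∀ n, f n ∈ I := fun n => (key (g n).1 (g n).2).choose_spec.1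
  have hf2 : ∀ n, f n ∉ Ideal.span ((g n).1 : Set A) :=
    fun n => (key (g n).1 (g n).2).choose_spec.2
  have hg : ∀ n, (g (n+1)).1 = (g n).1 ∪ {f n} := fun n => rfl
  have hgmono : Monotone fun n => (g n).1 :=
    monotone_nat_of_le_succ (fun n => by rw [hg]; exact Finset.subset_union_left)
  have hmem : ∀ k, f k ∈ Ideal.span ((g (k+1)).1 : Set A) := fun k => by
    apply Ideal.subset_span
    rw [hg]; simp
  have hle : Ideal.span (Set.range f) ≤ ⨆ n, Ideal.span ((g n).1 : Set A) := by
    rw [Ideal.span_le]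
    rintro x ⟨k, rfl⟩
    exact Ideal.mem_iSup_of_mem (k+1) (hmem k)
  obtain ⟨t, ht⟩ := h (Set.range f) (Set.countable_range f)
  have hdir : Directed (· ≤ ·) fun n => Ideal.span ((g n).1 : Set A) := by
    intro m n
    exact ⟨max m n, Ideal.span_mono (hgmono (le_max_left m n)),
      Ideal.span_mono (hgmono (le_max_right m n))⟩
  have ht' : ∀ x ∈ t, ∃ n, x ∈ Ideal.span ((g n).1 : Set A) := by
    intro x hx
    have hx' : x ∈ Ideal.span (Set.range f) := ht ▸ Ideal.subset_span hx
    exact (Submodule.mem_iSup_of_directed _ hdir).mp (hle hx')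
  choose n hn using ht'
  let N := t.attach.sup fun x => n x.1 x.2
  have hspan : Ideal.span (↑t : Set A) ≤ Ideal.span ((g N).1 : Set A) := by
    rw [Ideal.span_le]
    intro x hx
    exact Ideal.span_mono (hgmono (Finset.le_sup (Finset.mem_attach t ⟨x, hx⟩)))
      (hn x hx)
  have : f N ∈ Ideal.span ((g N).1 : Set A) := by
    apply hspan
    rw [ht]
    exact Ideal.subset_span ⟨N, rfl⟩
  exact hf2 N this
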